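/- Let μ be a finite Borel measure on ℝ³ whose support is contained in a compact set K, and let ψ : ℝ³ → ℝ be bounded and measurable. Then the single layer potential u(x) = ∫ ψ(y)/(4π‖x − y‖₂) dμ(y) is a harmonic function of x on the open set ℝ³ \ K: it is twice differentiable there and the sum of its second partial derivatives along the coordinate directions vanishes at every x ∉ K. -/

import Mathlib

open Real MeasureTheory
open scoped RealInnerProductSpace

set_option maxHeartbeats 1000000
set_option synthInstance.maxHeartbeats 400000

noncomputable instance slpCA : ContinuousAdd (EuclideanSpace ℝ (Fin 3) →L[ℝ] EuclideanSpace ℝ (Fin 3) →L[ℝ] ℝ) :=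
  ContinuousLinearMap.topologicalAddGroup.toContinuousAdd

noncomputable instance slpCE : ContinuousENorm (EuclideanSpace ℝ (Fin 3) →L[ℝ] EuclideanSpace ℝ (Fin 3) →L[ℝ] ℝ) :=
  @SeminormedAddGroup.toContinuousENorm (EuclideanSpace ℝ (Fin 3) →L[ℝ] EuclideanSpace ℝ (Fin 3) →L[ℝ] ℝ) _

noncomputable section SLPaux

local notation "E3" => EuclideanSpace ℝ (Fin 3)

def slpPhi : E3 →L[ℝ] E3 →L[ℝ] ℝ :=
  LinearMap.mkContinuous₂ (innerₗ E3) 1 fun x y => by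
    simpa using abs_real_inner_le_norm x y

@[simp] lemma slpPhi_apply (x y : E3) : slpPhi x y = ⟪x, y⟫ := rfl

lemma slpPhi_norm_le (z : E3) : ‖slpPhi z‖ ≤ ‖z‖ :=
  ContinuousLinearMap.opNorm_le_bound _ (norm_nonneg z) fun w => by
    simpa using abs_real_inner_le_norm z w

lemma slp_norm_smul {F : Type*} [NormedAddCommGroup F] [NormedSpace ℝ F] (c : ℝ) (f : F) :
    ‖c • f‖ = ‖c‖ * ‖f‖ := @norm_smul ℝ _ _ _ _ NormedSpace.toNormSMulClass c f

lemma slp_norm_smul_clm1 (a : ℝ) (f : E3 →L[ℝ] ℝ) : ‖a • f‖ = |a| * ‖f‖ := by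
  rw [← Real.norm_eq_abs]; exact @norm_smul ℝ _ _ _ _ NormedSpace.toNormSMulClass a f

lemma slp_norm_smul_clm2 (a : ℝ) (f : E3 →L[ℝ] E3 →L[ℝ] ℝ) : ‖a • f‖ = |a| * ‖f‖ := by
  rw [← Real.norm_eq_abs]; exact @norm_smul ℝ _ _ _ _ NormedSpace.toNormSMulClass a f

lemma slp_norm_nonneg_clm2 (f : E3 →L[ℝ] E3 →L[ℝ] ℝ) : (0:ℝ) ≤ ‖f‖ := norm_nonneg f

def slpD1 (z : E3) : E3 →L[ℝ] ℝ := (-(‖z‖ ^ 3)⁻¹) • slpPhi z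

def slpD2 (z : E3) : E3 →L[ℝ] E3 →L[ℝ] ℝ :=
  (-(‖z‖ ^ 3)⁻¹) • slpPhi + (3 * (‖z‖ ^ 5)⁻¹) • (slpPhi z).smulRight (slpPhi z)

lemma slpD1_apply (z w : E3) : slpD1 z w = -(‖z‖ ^ 3)⁻¹ * ⟪z, w⟫ := by
  simp [slpD1]

lemma slpD2_apply (z w v : E3) :
    slpD2 z w v = -(‖z‖ ^ 3)⁻¹ * ⟪w, v⟫ + 3 * (‖z‖ ^ 5)⁻¹ * (⟪z, w⟫ * ⟪z, v⟫) := by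
  simp [slpD2, mul_assoc]

lemma slp_hasFDerivAt_inv_norm {z : E3} (hz : z ≠ 0) :
    HasFDerivAt (fun w : E3 => ‖w‖⁻¹) (slpD1 z) z := by
  have hq : HasFDerivAt (fun w : E3 => ⟪w, w⟫)
      ((fderivInnerCLM ℝ (z, z)).comp ((ContinuousLinearMap.id ℝ E3).prod
        (ContinuousLinearMap.id ℝ E3))) z :=
    (hasFDerivAt_id z).inner ℝ (hasFDerivAt_id z)
  have hz0 : (0:ℝ) < ⟪z, z⟫ := by
    have := real_inner_self_nonneg (x := z)
    rcases this.lt_or_eq with h | h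
    · exact h
    · exact absurd (inner_self_eq_zero.1 h.symm) hz
  have hsq : Real.sqrt ⟪z, z⟫ = ‖z‖ := by
    rw [real_inner_self_eq_norm_mul_norm, Real.sqrt_mul_self (norm_nonneg z)]
  have hnz : ‖z‖ ≠ 0 := norm_ne_zero_iff.2 hz
  have hs : HasDerivAt (fun t : ℝ => (Real.sqrt t)⁻¹)
      (-(1 / (2 * Real.sqrt ⟪z, z⟫)) / (Real.sqrt ⟪z, z⟫) ^ 2) ⟪z, z⟫ :=
    (Real.hasDerivAt_sqrt hz0.ne').inv (by rw [hsq]; exact hnz)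
  have hcomp := HasDerivAt.comp_hasFDerivAt (f := fun w : E3 => ⟪w, w⟫) z hs hq
  have heq : (fun t : ℝ => (Real.sqrt t)⁻¹) ∘ (fun w : E3 => ⟪w, w⟫) = fun w : E3 => ‖w‖⁻¹ := by
    funext w
    simp only [Function.comp_apply]
    rw [real_inner_self_eq_norm_mul_norm, Real.sqrt_mul_self (norm_nonneg w)]
  rw [heq] at hcomp
  refine hcomp.congr_fderiv ?_
  ext w
  simp only [ContinuousLinearMap.coe_smul', Pi.smul_apply, ContinuousLinearMap.coe_comp',
    Function.comp_apply, ContinuousLinearMap.prod_apply, ContinuousLinearMap.coe_id', id_eq,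
    fderivInnerCLM_apply, slpD1_apply, hsq, smul_eq_mul]
  rw [real_inner_comm w z]
  field_simp
  ring

end SLPaux

section more
local notation "E3'" => EuclideanSpace ℝ (Fin 3)

lemma slp_hasFDerivAt_D1 {z : E3'} (hz : z ≠ 0) :
    HasFDerivAt slpD1 (slpD2 z) z := by
  have hnz : ‖z‖ ≠ 0 := norm_ne_zero_iff.2 hz
  have hinv := slp_hasFDerivAt_inv_norm hz
  have hc : HasFDerivAt (fun w : E3' => -(‖w‖ ^ 3)⁻¹)
      (-((3 * ‖z‖⁻¹ ^ 2) • slpD1 z)) z := by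
    have hp : HasDerivAt (fun t : ℝ => -(t ^ 3)) (-(3 * ‖z‖⁻¹ ^ 2)) ‖z‖⁻¹ := by
      simpa using (hasDerivAt_pow 3 (‖z‖⁻¹)).fun_neg
    have h1 := hp.comp_hasFDerivAt (f := fun w : E3' => ‖w‖⁻¹) z hinv
    have h2 : HasFDerivAt (fun w : E3' => -(‖w‖⁻¹ ^ 3)) (-((3 * ‖z‖⁻¹ ^ 2) • slpD1 z)) z := by
      refine h1.congr_fderiv ?_
      ext w
      simp [smul_smul]
    refine h2.congr_of_eventuallyEq (Filter.Eventually.of_forall fun w => ?_)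
    simp [inv_pow]
  have hPhi : HasFDerivAt (fun w : E3' => slpPhi w) (slpPhi) z :=
    slpPhi.hasFDerivAt
  have hsmul := hc.fun_smul hPhi
  have : (fun w : E3' => -(‖w‖ ^ 3)⁻¹ • slpPhi w) = slpD1 := by
    funext w; simp [slpD1]
  rw [this] at hsmul
  refine hsmul.congr_fderiv ?_
  ext w v
  simp only [ContinuousLinearMap.add_apply, ContinuousLinearMap.coe_smul', Pi.smul_apply,
    ContinuousLinearMap.smulRight_apply, ContinuousLinearMap.neg_apply, smul_eq_mul,
    slpD2_apply, slpD1_apply, slpPhi_apply, ContinuousLinearMap.coe_neg', Pi.neg_apply]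
  field_simp

lemma slpD1_norm_le {ε : ℝ} {z : E3'} (hε : 0 < ε) (h : ε ≤ ‖z‖) :
    ‖slpD1 z‖ ≤ (ε ^ 2)⁻¹ := by
  have hz : (0:ℝ) < ‖z‖ := lt_of_lt_of_le hε h
  refine ContinuousLinearMap.opNorm_le_bound _ (by positivity) fun w => ?_
  rw [slpD1_apply, Real.norm_eq_abs, abs_mul, abs_neg, abs_of_nonneg (by positivity : (0:ℝ) ≤ (‖z‖^3)⁻¹)]
  have h1 : |⟪z, w⟫| ≤ ‖z‖ * ‖w‖ := abs_real_inner_le_norm z w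
  calc (‖z‖ ^ 3)⁻¹ * |⟪z, w⟫| ≤ (‖z‖ ^ 3)⁻¹ * (‖z‖ * ‖w‖) := by
        exact mul_le_mul_of_nonneg_left h1 (by positivity)
    _ = (‖z‖ ^ 2)⁻¹ * ‖w‖ := by field_simp
    _ ≤ (ε ^ 2)⁻¹ * ‖w‖ := by
        have : (‖z‖ ^ 2)⁻¹ ≤ (ε ^ 2)⁻¹ := by gcongr
        exact mul_le_mul_of_nonneg_right this (norm_nonneg w)

lemma slpD2_norm_le {ε : ℝ} {z : E3'} (hε : 0 < ε) (h : ε ≤ ‖z‖) :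
    ‖slpD2 z‖ ≤ 4 * (ε ^ 3)⁻¹ := by
  have hz : (0:ℝ) < ‖z‖ := lt_of_lt_of_le hε h
  refine ContinuousLinearMap.opNorm_le_bound _ (by positivity) fun w => ?_
  refine ContinuousLinearMap.opNorm_le_bound _ (by positivity) fun v => ?_
  rw [slpD2_apply]
  have h1 : |⟪w, v⟫| ≤ ‖w‖ * ‖v‖ := abs_real_inner_le_norm w v
  have h2 : |⟪z, w⟫| ≤ ‖z‖ * ‖w‖ := abs_real_inner_le_norm z w
  have h3 : |⟪z, v⟫| ≤ ‖z‖ * ‖v‖ := abs_real_inner_le_norm z v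
  have habs : |(-(‖z‖ ^ 3)⁻¹ * ⟪w, v⟫ + 3 * (‖z‖ ^ 5)⁻¹ * (⟪z, w⟫ * ⟪z, v⟫))|
      ≤ (‖z‖ ^ 3)⁻¹ * (‖w‖ * ‖v‖) + 3 * (‖z‖ ^ 5)⁻¹ * ((‖z‖ * ‖w‖) * (‖z‖ * ‖v‖)) := by
    refine (abs_add_le _ _).trans (add_le_add ?_ ?_)
    · rw [abs_mul, abs_neg, abs_of_nonneg (by positivity : (0:ℝ) ≤ (‖z‖^3)⁻¹)]
      exact mul_le_mul_of_nonneg_left h1 (by positivity)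
    · rw [abs_mul, abs_of_nonneg (by positivity : (0:ℝ) ≤ 3 * (‖z‖^5)⁻¹), abs_mul]
      exact mul_le_mul_of_nonneg_left
        (mul_le_mul h2 h3 (abs_nonneg _) (by positivity)) (by positivity)
  rw [Real.norm_eq_abs]
  refine habs.trans ?_
  have he : (‖z‖ ^ 3)⁻¹ * (‖w‖ * ‖v‖) + 3 * (‖z‖ ^ 5)⁻¹ * ((‖z‖ * ‖w‖) * (‖z‖ * ‖v‖))
      = 4 * (‖z‖ ^ 3)⁻¹ * ‖w‖ * ‖v‖ := by field_simp; ring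
  rw [he]
  have : (‖z‖ ^ 3)⁻¹ ≤ (ε ^ 3)⁻¹ := by gcongr
  gcongr

lemma slpD2_trace {z : E3'} (hz : z ≠ 0) :
    ∑ i : Fin 3, slpD2 z (EuclideanSpace.single i (1:ℝ)) (EuclideanSpace.single i (1:ℝ)) = 0 := by
  have hnz : ‖z‖ ≠ 0 := norm_ne_zero_iff.2 hz
  have hsum : ∑ i : Fin 3, ⟪z, EuclideanSpace.single i (1:ℝ)⟫ ^ 2 = ‖z‖ ^ 2 := by
    have hn : ‖z‖ ^ 2 = ∑ i : Fin 3, ‖z i‖ ^ 2 := by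
      rw [EuclideanSpace.norm_eq, Real.sq_sqrt (by positivity)]
    rw [hn]
    refine Finset.sum_congr rfl fun i _ => ?_
    rw [EuclideanSpace.inner_single_right]
    simp [Real.norm_eq_abs, sq_abs]
  have hdiag : ∀ i : Fin 3,
      ⟪(EuclideanSpace.single i (1:ℝ) : E3'), EuclideanSpace.single i (1:ℝ)⟫ = 1 := by
    intro i
    rw [EuclideanSpace.inner_single_right]
    simp
  simp only [slpD2_apply]
  rw [Finset.sum_add_distrib]
  have e1 : ∑ i : Fin 3, -(‖z‖ ^ 3)⁻¹ *
      ⟪(EuclideanSpace.single i (1:ℝ) : E3'), EuclideanSpace.single i (1:ℝ)⟫ = -3 * (‖z‖^3)⁻¹ := by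
    simp [hdiag]
  have e2 : ∑ i : Fin 3, 3 * (‖z‖ ^ 5)⁻¹ *
      (⟪z, EuclideanSpace.single i (1:ℝ)⟫ * ⟪z, EuclideanSpace.single i (1:ℝ)⟫) =
      3 * (‖z‖ ^ 5)⁻¹ * ‖z‖ ^ 2 := by
    rw [← Finset.mul_sum]
    congr 1
    rw [← hsum]
    refine Finset.sum_congr rfl fun i _ => ?_
    ring
  rw [e1, e2]
  field_simp
  ring

lemma slpD2_continuousAt {z : E3'} (hz : z ≠ 0) : ContinuousAt slpD2 z := by
  have hnz : ‖z‖ ≠ 0 := norm_ne_zero_iff.2 hz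
  have hc1 : ContinuousAt (fun w : E3' => -(‖w‖ ^ 3)⁻¹) z :=
    (((continuous_norm.pow 3).continuousAt).inv₀ (pow_ne_zero 3 hnz)).neg
  have hc2 : ContinuousAt (fun w : E3' => 3 * (‖w‖ ^ 5)⁻¹) z :=
    (((continuous_norm.pow 5).continuousAt).inv₀ (pow_ne_zero 5 hnz)).const_mul 3
  have hR : Continuous (fun w : E3' => (slpPhi w).smulRight (slpPhi w)) := by
    have h1 : Continuous (fun w : E3' =>
        ((ContinuousLinearMap.smulRightL ℝ E3' (E3' →L[ℝ] ℝ)).comp slpPhi) w) :=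
      (((ContinuousLinearMap.smulRightL ℝ E3' (E3' →L[ℝ] ℝ)).comp slpPhi)).continuous
    have h2 : Continuous (fun w : E3' => slpPhi w) := slpPhi.continuous
    exact isBoundedBilinearMap_apply.continuous.comp (h1.prodMk h2)
  exact (hc1.smul continuousAt_const).add (hc2.smul hR.continuousAt)

end more

section main
open Metric

local notation "E3m" => EuclideanSpace ℝ (Fin 3)

lemma slp_aesm_f (μ : Measure E3m) (c : E3m → ℝ) (hc : Measurable c) (x : E3m) :
    AEStronglyMeasurable (fun y => c y * ‖x - y‖⁻¹) μ :=
  (hc.mul ((continuous_const.sub continuous_id).norm.measurable.inv)).aestronglyMeasurable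

lemma slp_aesm_d1 (μ : Measure E3m) (c : E3m → ℝ) (hc : Measurable c) (x : E3m) :
    AEStronglyMeasurable (fun y => c y • slpD1 (x - y)) μ := by
  have heq : (fun y : E3m => c y • slpD1 (x - y)) =
      fun y : E3m => (c y * -(‖x - y‖ ^ 3)⁻¹) • slpPhi (x - y) := by
    funext y
    rw [slpD1, smul_smul]
  rw [heq]
  have h1 : StronglyMeasurable (fun y : E3m => c y * -(‖x - y‖ ^ 3)⁻¹) :=
    (hc.mul (((continuous_const.sub continuous_id).norm.measurable.pow_const 3).inv.neg)).stronglyMeasurable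
  have h2 : StronglyMeasurable (fun y : E3m => slpPhi (x - y)) :=
    (slpPhi.continuous.comp (continuous_const.sub continuous_id)).stronglyMeasurable
  exact (h1.smul h2).aestronglyMeasurable

lemma slp_aesm_d2 (μ : Measure E3m) (c : E3m → ℝ) (hc : Measurable c) (x : E3m) :
    AEStronglyMeasurable (fun y => c y • slpD2 (x - y)) μ := by
  have heq : (fun y : E3m => c y • slpD2 (x - y)) =
      fun y : E3m => (c y * -(‖x - y‖ ^ 3)⁻¹) • (slpPhi : E3m →L[ℝ] E3m →L[ℝ] ℝ)
        + (c y * (3 * (‖x - y‖ ^ 5)⁻¹)) • (slpPhi (x - y)).smulRight (slpPhi (x - y)) := by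
    funext y
    rw [slpD2]
    ext w v
    simp only [ContinuousLinearMap.add_apply, ContinuousLinearMap.coe_smul', Pi.smul_apply,
      ContinuousLinearMap.smulRight_apply, smul_eq_mul, slpPhi_apply]
    ring
  rw [heq]
  have hm1 : StronglyMeasurable (fun y : E3m => c y * -(‖x - y‖ ^ 3)⁻¹) :=
    (hc.mul (((continuous_const.sub continuous_id).norm.measurable.pow_const 3).inv.neg)).stronglyMeasurable
  have hm2 : StronglyMeasurable (fun y : E3m => c y * (3 * (‖x - y‖ ^ 5)⁻¹)) :=
    (hc.mul ((((continuous_const.sub continuous_id).norm.measurable.pow_const 5).inv).const_mul 3)).stronglyMeasurable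
  have hv : Continuous (fun y : E3m => (slpPhi (x - y)).smulRight (slpPhi (x - y))) := by
    have h1 : Continuous (fun y : E3m =>
        ((ContinuousLinearMap.smulRightL ℝ E3m (E3m →L[ℝ] ℝ)).comp slpPhi) (x - y)) :=
      (((ContinuousLinearMap.smulRightL ℝ E3m (E3m →L[ℝ] ℝ)).comp slpPhi)).continuous.comp
        (continuous_const.sub continuous_id)
    have h2 : Continuous (fun y : E3m => slpPhi (x - y)) :=
      slpPhi.continuous.comp (continuous_const.sub continuous_id)
    exact isBoundedBilinearMap_apply.continuous.comp (h1.prodMk h2)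
  exact ((hm1.smul stronglyMeasurable_const).add (hm2.smul hv.stronglyMeasurable)).aestronglyMeasurable

theorem slp_key (μ : Measure E3m) [IsFiniteMeasure μ] (K : Set E3m) (hKc : IsClosed K)
    (hsupp : μ Kᶜ = 0) (c : E3m → ℝ) (hc : Measurable c) (M : ℝ) (hM : ∀ y, |c y| ≤ M)
    {x₀ : E3m} (hx₀ : x₀ ∉ K) :
    HasFDerivAt (fun x => ∫ y, c y * ‖x - y‖⁻¹ ∂μ) (∫ y, c y • slpD1 (x₀ - y) ∂μ) x₀ ∧
    HasFDerivAt (fun x => ∫ y, c y • slpD1 (x - y) ∂μ) (∫ y, c y • slpD2 (x₀ - y) ∂μ) x₀ ∧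
    ContinuousAt (fun x => ∫ y, c y • slpD2 (x - y) ∂μ) x₀ ∧
    Integrable (fun y => c y • slpD2 (x₀ - y)) μ := by
  have hM0 : 0 ≤ M := (abs_nonneg _).trans (hM 0)
  obtain ⟨δ, hδ, hball⟩ : ∃ δ > 0, Metric.ball x₀ δ ⊆ Kᶜ :=
    Metric.isOpen_iff.1 hKc.isOpen_compl x₀ hx₀
  set ε : ℝ := δ / 2 with hεdef
  have hε : 0 < ε := by positivity
  have hsep : ∀ y ∈ K, ∀ x ∈ Metric.ball x₀ ε, ε ≤ ‖x - y‖ := by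
    intro y hy x hx
    by_contra hlt
    push_neg at hlt
    have hyball : y ∈ Metric.ball x₀ δ := by
      have h1 : dist y x₀ ≤ dist y x + dist x x₀ := dist_triangle y x x₀
      have h2 : dist y x = ‖x - y‖ := by rw [dist_eq_norm, norm_sub_rev]
      have h3 : dist x x₀ < ε := hx
      have : dist y x₀ < ε + ε := by rw [h2] at h1; linarith
      simpa [Metric.mem_ball, hεdef] using this.trans_le (by linarith)
    exact hball hyball hy
  have haeK : ∀ᵐ y ∂μ, y ∈ K := by
    have h : {y : E3m | ¬ y ∈ K} = Kᶜ := rfl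
    rw [ae_iff, h]
    exact hsupp
  have hx₀ball : x₀ ∈ Metric.ball x₀ ε := Metric.mem_ball_self hε
  have hne : ∀ y ∈ K, ∀ x ∈ Metric.ball x₀ ε, x - y ≠ 0 := by
    intro y hy x hx h0
    have := hsep y hy x hx
    rw [h0, norm_zero] at this
    exact absurd this (not_le.2 hε)
  -- bounds
  have hbd1 : ∀ᵐ y ∂μ, ∀ x ∈ Metric.ball x₀ ε, ‖c y • slpD1 (x - y)‖ ≤ M * (ε ^ 2)⁻¹ := by
    refine haeK.mono fun y hy x hx => ?_
    calc ‖c y • slpD1 (x - y)‖ = |c y| * ‖slpD1 (x - y)‖ := slp_norm_smul_clm1 _ _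
      _ ≤ M * (ε ^ 2)⁻¹ :=
          mul_le_mul (hM y) (slpD1_norm_le hε (hsep y hy x hx)) (norm_nonneg _) hM0
  have hbd2 : ∀ᵐ y ∂μ, ∀ x ∈ Metric.ball x₀ ε, ‖c y • slpD2 (x - y)‖ ≤ M * (4 * (ε ^ 3)⁻¹) := by
    refine haeK.mono fun y hy x hx => ?_
    calc ‖c y • slpD2 (x - y)‖ = |c y| * ‖slpD2 (x - y)‖ := slp_norm_smul_clm2 _ _
      _ ≤ M * (4 * (ε ^ 3)⁻¹) :=
          mul_le_mul (hM y) (slpD2_norm_le hε (hsep y hy x hx)) (slp_norm_nonneg_clm2 _) hM0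
  -- integrabilities
  have hint_f : Integrable (fun y => c y * ‖x₀ - y‖⁻¹) μ := by
    refine Integrable.mono' (integrable_const (M * ε⁻¹)) (slp_aesm_f μ c hc x₀) ?_
    refine haeK.mono fun y hy => ?_
    have h1 : ε ≤ ‖x₀ - y‖ := hsep y hy x₀ hx₀ball
    have h2 : ‖x₀ - y‖⁻¹ ≤ ε⁻¹ := inv_anti₀ hε h1
    calc ‖c y * ‖x₀ - y‖⁻¹‖ = |c y| * ‖x₀ - y‖⁻¹ := by
          rw [Real.norm_eq_abs, abs_mul, abs_inv, abs_norm]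
      _ ≤ M * ε⁻¹ := mul_le_mul (hM y) h2 (by positivity) hM0
  have hint_d1 : Integrable (fun y => c y • slpD1 (x₀ - y)) μ := by
    refine Integrable.mono' (integrable_const (M * (ε ^ 2)⁻¹)) (slp_aesm_d1 μ c hc x₀) ?_
    exact hbd1.mono fun y hy => hy x₀ hx₀ball
  have hint_d2 : Integrable (fun y => c y • slpD2 (x₀ - y)) μ := by
    refine Integrable.mono' (μ := μ) (f := fun y => c y • slpD2 (x₀ - y))
      (integrable_const (M * (4 * (ε ^ 3)⁻¹))) ?_ ?_
    · exact slp_aesm_d2 μ c hc x₀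
    exact hbd2.mono fun y hy => hy x₀ hx₀ball
  -- differentiability of integrands
  have hdiff1 : ∀ᵐ y ∂μ, ∀ x ∈ Metric.ball x₀ ε,
      HasFDerivAt (fun x => c y * ‖x - y‖⁻¹) (c y • slpD1 (x - y)) x := by
    refine haeK.mono fun y hy x hx => ?_
    have h1 := slp_hasFDerivAt_inv_norm (hne y hy x hx)
    have h2 : HasFDerivAt (fun x : E3m => x - y) (ContinuousLinearMap.id ℝ _) x :=
      (hasFDerivAt_id x).sub_const y
    have h3 := h1.comp x h2
    have h4 : HasFDerivAt (fun x : E3m => ‖x - y‖⁻¹) (slpD1 (x - y)) x := by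
      simpa [Function.comp_def] using h3
    exact h4.const_mul (c y)
  have hdiff2 : ∀ᵐ y ∂μ, ∀ x ∈ Metric.ball x₀ ε,
      HasFDerivAt (fun x => c y • slpD1 (x - y)) (c y • slpD2 (x - y)) x := by
    refine haeK.mono fun y hy x hx => ?_
    have h1 := slp_hasFDerivAt_D1 (hne y hy x hx)
    have h2 : HasFDerivAt (fun x : E3m => x - y) (ContinuousLinearMap.id ℝ _) x :=
      (hasFDerivAt_id x).sub_const y
    have h3 := h1.comp x h2
    have h4 : HasFDerivAt (fun x : E3m => slpD1 (x - y)) (slpD2 (x - y)) x := by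
      simpa [Function.comp_def] using h3
    exact h4.const_smul (c y)
  refine ⟨?_, ?_, ?_, hint_d2⟩
  · exact hasFDerivAt_integral_of_dominated_of_fderiv_le (𝕜 := ℝ) (Metric.ball_mem_nhds x₀ hε)
      (Filter.Eventually.of_forall (slp_aesm_f μ c hc))
      hint_f (slp_aesm_d1 μ c hc x₀) hbd1 (integrable_const _) hdiff1
  · exact hasFDerivAt_integral_of_dominated_of_fderiv_le (𝕜 := ℝ) (Metric.ball_mem_nhds x₀ hε)
      (Filter.Eventually.of_forall (slp_aesm_d1 μ c hc))
      hint_d1 (by exact slp_aesm_d2 μ c hc x₀) hbd2 (integrable_const _) hdiff2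
  · refine continuousAt_of_dominated (Filter.Eventually.of_forall (slp_aesm_d2 μ c hc))
      ?_ (integrable_const (M * (4 * (ε ^ 3)⁻¹))) ?_
    · refine Filter.eventually_of_mem (Metric.ball_mem_nhds x₀ hε) fun x hx => ?_
      exact hbd2.mono fun y hy => hy x hx
    · refine haeK.mono fun y hy => ?_
      have hsub : ContinuousAt (fun x : E3m => x - y) x₀ :=
        (continuous_id.sub continuous_const).continuousAt
      have hcont := ContinuousAt.comp (g := slpD2) (f := fun x : E3m => x - y) (x := x₀)
        (slpD2_continuousAt (hne y hy x₀ hx₀ball)) hsub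
      have hcont' : ContinuousAt (fun x : E3m => slpD2 (x - y)) x₀ := hcont
      exact hcont'.const_smul (c y)

end main

section final
open Metric

local notation "E3f" => EuclideanSpace ℝ (Fin 3)

/-- Let `μ` be a finite Borel measure on `ℝ³` whose support is contained in a compact set `K`
(i.e. `μ(Kᶜ) = 0`), and let `ψ : ℝ³ → ℝ` be bounded and measurable. Then the single layer
potential `u(x) = ∫ ψ(y)/(4π‖x − y‖) dμ(y)` is harmonic on `ℝ³ \ K`: it is twice
differentiable there and the sum of its second partial derivatives along the coordinate
directions vanishes at every `x ∉ K`. -/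
theorem single_layer_potential_harmonic
    (μ : Measure (EuclideanSpace ℝ (Fin 3))) [IsFiniteMeasure μ]
    (K : Set (EuclideanSpace ℝ (Fin 3))) (hK : IsCompact K) (hsupp : μ Kᶜ = 0)
    (ψ : EuclideanSpace ℝ (Fin 3) → ℝ) (hψ : Measurable ψ)
    (hbd : ∃ M : ℝ, ∀ y, |ψ y| ≤ M) :
    ContDiffOn ℝ 2
      (fun x : EuclideanSpace ℝ (Fin 3) => ∫ y, ψ y / (4 * Real.pi * ‖x - y‖) ∂μ) Kᶜ ∧
    ∀ x : EuclideanSpace ℝ (Fin 3), x ∉ K →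
      ∑ i : Fin 3,
        fderiv ℝ (fun z : EuclideanSpace ℝ (Fin 3) =>
            fderiv ℝ
              (fun x : EuclideanSpace ℝ (Fin 3) => ∫ y, ψ y / (4 * Real.pi * ‖x - y‖) ∂μ) z
              (EuclideanSpace.single i (1 : ℝ)))
          x (EuclideanSpace.single i (1 : ℝ)) = 0 := by
  obtain ⟨M, hM⟩ := hbd
  set c : E3f → ℝ := fun y => ψ y * (4 * Real.pi)⁻¹ with hcdef
  have hc : Measurable c := hψ.mul_const _
  have hπ : (0:ℝ) < 4 * Real.pi := by positivity
  have hMc : ∀ y, |c y| ≤ M * (4 * Real.pi)⁻¹ := fun y => by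
    rw [hcdef]
    simp only
    rw [abs_mul, abs_of_nonneg (by positivity : (0:ℝ) ≤ (4 * Real.pi)⁻¹)]
    exact mul_le_mul_of_nonneg_right (hM y) (by positivity)
  have hfun : (fun x : E3f => ∫ y, ψ y / (4 * Real.pi * ‖x - y‖) ∂μ)
      = fun x : E3f => ∫ y, c y * ‖x - y‖⁻¹ ∂μ := by
    funext x
    refine integral_congr_ae (Filter.Eventually.of_forall fun y => ?_)
    simp only [hcdef]
    rw [div_eq_mul_inv, mul_inv]
    ring
  have hKO : IsOpen Kᶜ := hK.isClosed.isOpen_compl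
  have key := fun (x : E3f) (hx : x ∉ K) =>
    slp_key μ K hK.isClosed hsupp c hc (M * (4 * Real.pi)⁻¹) hMc hx
  have haeK : ∀ᵐ y ∂μ, y ∈ K := by
    have h : {y : E3f | ¬ y ∈ K} = Kᶜ := rfl
    rw [ae_iff, h]
    exact hsupp
  constructor
  · rw [hfun]
    rw [show (2 : WithTop ℕ∞) = 1 + 1 by norm_num]
    refine (contDiffOn_succ_iff_fderiv_of_isOpen hKO).2 ⟨?_, ?_, ?_⟩
    · exact fun x hx => ((key x hx).1).differentiableAt.differentiableWithinAt
    · intro h; exact absurd h (by simp)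
    · have hcongr : ∀ x ∈ Kᶜ, fderiv ℝ (fun x : E3f => ∫ y, c y * ‖x - y‖⁻¹ ∂μ) x
          = ∫ y, c y • slpD1 (x - y) ∂μ := fun x hx => ((key x hx).1).fderiv
      refine ContDiffOn.congr ?_ hcongr
      rw [show (1 : WithTop ℕ∞) = 0 + 1 by norm_num]
      refine (contDiffOn_succ_iff_fderiv_of_isOpen hKO).2 ⟨?_, ?_, ?_⟩
      · exact fun x hx => ((key x hx).2.1).differentiableAt.differentiableWithinAt
      · intro h; exact absurd h (by simp)
      · refine ContDiffOn.congr (contDiffOn_zero.2 fun x hx =>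
          ((key x hx).2.2.1).continuousWithinAt) (fun x hx => ((key x hx).2.1).fderiv)
  · intro x hx
    rw [hfun]
    have hint : Integrable (fun y => c y • slpD2 (x - y)) μ := (key x hx).2.2.2
    have hstep : ∀ i : Fin 3,
        fderiv ℝ (fun z : E3f =>
          fderiv ℝ (fun x : E3f => ∫ y, c y * ‖x - y‖⁻¹ ∂μ) z (EuclideanSpace.single i (1:ℝ)))
          x (EuclideanSpace.single i (1:ℝ))
        = (∫ y, c y • slpD2 (x - y) ∂μ) (EuclideanSpace.single i (1:ℝ))
            (EuclideanSpace.single i (1:ℝ)) := by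
      intro i
      set v : E3f := EuclideanSpace.single i (1:ℝ)
      have hev : (fun z : E3f =>
          fderiv ℝ (fun x : E3f => ∫ y, c y * ‖x - y‖⁻¹ ∂μ) z v)
          =ᶠ[nhds x] (fun z : E3f => (∫ y, c y • slpD1 (z - y) ∂μ) v) := by
        refine Filter.eventually_of_mem (hKO.mem_nhds hx) fun z hz => ?_
        show fderiv ℝ (fun x : E3f => ∫ y, c y * ‖x - y‖⁻¹ ∂μ) z v
          = (∫ y, c y • slpD1 (z - y) ∂μ) v
        rw [((key z hz).1).fderiv]
      rw [hev.fderiv_eq]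
      have happ : HasFDerivAt (fun z : E3f => (∫ y, c y • slpD1 (z - y) ∂μ) v)
          ((ContinuousLinearMap.apply ℝ ℝ v).comp (∫ y, c y • slpD2 (x - y) ∂μ)) x :=
        (ContinuousLinearMap.apply ℝ ℝ v).hasFDerivAt.comp x ((key x hx).2.1)
      rw [happ.fderiv]
      rfl
    have happly : ∀ i : Fin 3,
        (∫ y, c y • slpD2 (x - y) ∂μ) (EuclideanSpace.single i (1:ℝ))
          (EuclideanSpace.single i (1:ℝ))
        = ∫ y, c y * (slpD2 (x - y) (EuclideanSpace.single i (1:ℝ))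
            (EuclideanSpace.single i (1:ℝ))) ∂μ := by
      intro i
      set v : E3f := EuclideanSpace.single i (1:ℝ)
      rw [ContinuousLinearMap.integral_apply hint v]
      rw [ContinuousLinearMap.integral_apply (hint.apply_continuousLinearMap v) v]
      refine integral_congr_ae (Filter.Eventually.of_forall fun y => ?_)
      simp
    simp only [hstep, happly]
    rw [← integral_finset_sum]
    · rw [show (0:ℝ) = ∫ y, (0:ℝ) ∂μ by rw [integral_zero]]
      refine integral_congr_ae (haeK.mono fun y hy => ?_)
      show (∑ i : Fin 3, c y * (slpD2 (x - y) (EuclideanSpace.single i (1:ℝ))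
        (EuclideanSpace.single i (1:ℝ)))) = (0:ℝ)
      have hne : x - y ≠ 0 := by
        intro h0
        have : x = y := by
          have := sub_eq_zero.1 h0
          exact this
        exact hx (this ▸ hy)
      rw [← Finset.mul_sum, slpD2_trace hne, mul_zero]
    · intro i _
      have h1 := (hint.apply_continuousLinearMap
        (EuclideanSpace.single i (1:ℝ))).apply_continuousLinearMap (EuclideanSpace.single i (1:ℝ))
      refine h1.congr (Filter.Eventually.of_forall fun y => ?_)
      simp

end final
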